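/- For every integer sequence x (indexed from 1) satisfying the Pell recurrence x_j = 2x_{j-1} + x_{j-2} for all j ≥ 3, and for every k ≥ 1, the sum of the first 4k terms equals 2P_{2k} times the (2k+1)st term: ∑_{i=1}^{4k} x_i = 2·P_{2k}·x_{2k+1}. -/

import Mathlib

/-- The Pell numbers: P 0 = 0, P 1 = 1, P (n+2) = 2 * P (n+1) + P n. -/
def pell : ℕ → ℕ
  | 0 => 0
  | 1 => 1
  | n + 2 => 2 * pell (n + 1) + pell n

lemma pell_add : ∀ m n, pell (m + n + 1) = pell (m+1) * pell (n+1) + pell m * pell n := by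
  intro m
  induction m using Nat.twoStepInduction with
  | zero => intro n; simp [pell]
  | one => intro n; rw [show 1+n+1 = n+2 from by ring, show pell (n+2) = 2*pell (n+1) + pell n from rfl]; simp [pell]
  | more m ih1 ih2 =>
      intro n
      have e : m + 2 + n + 1 = (m + n + 1) + 2 := by ring
      rw [e, show pell ((m+n+1)+2) = 2 * pell (m+n+2) + pell (m+n+1) from rfl,
        show m + n + 2 = (m+1) + n + 1 from by ring, ih2 n, ih1 n,
        show pell (m+3) = 2 * pell (m+2) + pell (m+1) from rfl,
        show pell (m+2) = 2 * pell (m+1) + pell m from rfl]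
      ring

lemma pellZ_rec (n : ℕ) : (pell (n+2) : ℤ) = 2 * pell (n+1) + pell n := by
  push_cast [show pell (n+2) = 2 * pell (n+1) + pell n from rfl]; ring

lemma pell_cassini : ∀ n, (pell (n+2) : ℤ) * pell n + (-1)^n = (pell (n+1) : ℤ)^2 := by
  intro n
  induction n with
  | zero => simp [pell]
  | succ n ih =>
      have h : (pell (n+3) : ℤ) = 2 * pell (n+2) + pell (n+1) := pellZ_rec (n+1)
      have h2 := pellZ_rec n
      have hp : ((-1:ℤ))^(n+1) = -(-1)^n := by ring
      rw [show n+1+2 = n+3 from by ring, show n+1+1 = n+2 from by ring, hp, h]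
      linear_combination -ih - (pell (n+2):ℤ) * h2

/-- For every Pell-like integer sequence (indexed from 1), the sum of the first
4k terms equals 2 P_{2k} times the (2k+1)-st term. -/
theorem pell_like_trick (x : ℕ → ℤ)
    (hrec : ∀ j, 3 ≤ j → x j = 2 * x (j - 1) + x (j - 2)) (k : ℕ) (hk : 1 ≤ k) :
    ∑ i ∈ Finset.Icc 1 (4 * k), x i = 2 * (pell (2 * k) : ℤ) * x (2 * k + 1) := by
  have hcf : ∀ n, x (n + 2) = (pell (n+1) : ℤ) * x 2 + (pell n : ℤ) * x 1 := by
    intro n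
    induction n using Nat.twoStepInduction with
    | zero => simp [pell]
    | one =>
        have := hrec 3 (by norm_num)
        simp only [show (3:ℕ) - 1 = 2 from rfl, show (3:ℕ) - 2 = 1 from rfl] at this
        rw [show (1:ℕ)+2 = 3 from rfl, this]
        simp [pell]
    | more n ih1 ih2 =>
        have := hrec (n+4) (by omega)
        simp only [show n+4-1 = n+3 from by omega, show n+4-2 = n+2 from by omega] at this
        rw [show n+2+2 = n+4 from by ring, this, show n+3 = (n+1)+2 from by ring, ih2, ih1]
        rw [show n+1+1 = n+2 from by ring, pellZ_rec (n+1), pellZ_rec n]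
        ring
  have hsum : ∀ m, 2 * ∑ i ∈ Finset.Icc 1 (m+2), x i
      = ((pell (m+2) : ℤ) + pell (m+1) - 1) * x 2 + ((pell (m+1) : ℤ) + pell m + 1) * x 1 := by
    intro m
    induction m with
    | zero =>
        rw [show (0:ℕ)+2 = 2 from rfl, show Finset.Icc 1 2 = {1, 2} from rfl]
        simp [pell]; ring
    | succ m ih =>
        rw [show m+1+2 = (m+2)+1 from by ring,
          Finset.sum_Icc_succ_top (by omega : 1 ≤ m+2+1),
          show m+2+1 = (m+1)+2 from by ring, hcf (m+1),
          show m+1+2 = m+3 from by ring, show m+1+1 = m+2 from by ring,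
          pellZ_rec (m+1)]
        linear_combination ih - x 1 * pellZ_rec m
  obtain ⟨j, rfl⟩ : ∃ j, k = j + 1 := ⟨k - 1, by omega⟩
  have h1 := hsum (4*j+2)
  rw [show 4*j+2+2 = 4*j+4 from by ring, show 4*j+2+1 = 4*j+3 from by ring] at h1
  rw [show 4*(j+1) = 4*j+4 from by ring, show 2*(j+1)+1 = (2*j+1)+2 from by ring,
    show 2*(j+1) = 2*j+2 from by ring, hcf (2*j+1), show 2*j+1+1 = 2*j+2 from by ring]
  have hadd1 : (pell (4*j+4) : ℤ) = pell (2*j+3) * pell (2*j+2) + pell (2*j+2) * pell (2*j+1) := by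
    have := pell_add (2*j+2) (2*j+1)
    rw [show 2*j+2+(2*j+1)+1 = 4*j+4 from by ring] at this
    push_cast [this]; ring
  have hadd2 : (pell (4*j+3) : ℤ) = pell (2*j+2) * pell (2*j+2) + pell (2*j+1) * pell (2*j+1) := by
    have := pell_add (2*j+1) (2*j+1)
    rw [show 2*j+1+(2*j+1)+1 = 4*j+3 from by ring] at this
    push_cast [this]; ring
  have hadd3 : (pell (4*j+2) : ℤ) = pell (2*j+2) * pell (2*j+1) + pell (2*j+1) * pell (2*j) := by
    have := pell_add (2*j+1) (2*j)
    rw [show 2*j+1+2*j+1 = 4*j+2 from by ring] at this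
    push_cast [this]; ring
  have hcas := pell_cassini (2*j+1)
  have hpw : ((-1:ℤ))^(2*j+1) = -1 := by
    rw [pow_succ, pow_mul]; norm_num
  have e3 : (pell (2*j+3) : ℤ) = 2 * pell (2*j+2) + pell (2*j+1) := by
    have := pellZ_rec (2*j+1)
    rw [show 2*j+1+2 = 2*j+3 from by ring, show 2*j+1+1 = 2*j+2 from by ring] at this
    exact this
  rw [show 2*j+1+2 = 2*j+3 from by ring, show 2*j+1+1 = 2*j+2 from by ring, hpw, e3] at hcas
  have key2 : (pell (4*j+4) : ℤ) + pell (4*j+3) - 1 = 4 * (pell (2*j+2):ℤ)^2 := by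
    rw [hadd1, hadd2, e3]
    linear_combination hcas
  have key1 : (pell (4*j+3) : ℤ) + pell (4*j+2) + 1
      = 4 * (pell (2*j+2):ℤ) * pell (2*j+1) := by
    rw [hadd2, hadd3]
    linear_combination -hcas - (pell (2*j+1):ℤ) * pellZ_rec (2*j)
  have h2 : (2:ℤ) * ∑ i ∈ Finset.Icc 1 (4*j+4), x i
      = 2 * (2 * (pell (2*j+2) : ℤ) * ((pell (2*j+2):ℤ) * x 2 + (pell (2*j+1):ℤ) * x 1)) := by
    linear_combination h1 + x 2 * key2 + x 1 * key1
  exact mul_left_cancel₀ two_ne_zero h2
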